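/- For the SubsetSum instance, every diff from β_S to β_T under the family F(≤≥,+) has cost at least n; in particular every best diff has cost at least n. -/

import Mathlib

open scoped Classical

/-- An operation of the family `F(≤≥,+)`: if `dir = true` the condition is `A ≤ a`,
otherwise the condition is `A ≥ a`; the modifier is the increment `B ← B + b`. -/
structure OpIneqAdd where
  dir : Bool
  a : ℝ
  b : ℝ

/-- The condition of an operation, evaluated on an `A`-value `v`. -/
def OpIneqAdd.cond (f : OpIneqAdd) (v : ℤ) : Prop :=
  if f.dir then (v : ℝ) ≤ f.a else f.a ≤ (v : ℝ)

/-- Applying an operation: every key whose `A`-value satisfies the condition gets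
its `B`-value incremented by `b`; other keys are unchanged. -/
noncomputable def OpIneqAdd.apply {K : Type*} (α : K → ℤ) (f : OpIneqAdd) (β : K → ℝ) :
    K → ℝ :=
  fun k => if f.cond (α k) then β k + f.b else β k

/-- Successive application of a finite sequence of operations. -/
noncomputable def applyOpsIneqAdd {K : Type*} (α : K → ℤ) (L : List OpIneqAdd) (β : K → ℝ) :
    K → ℝ :=
  L.foldl (fun β' f => f.apply α β') β

/-- `L` is a diff from `βS` to `βT` under `F(≤≥,+)`. -/
def IsDiffIneqAdd {K : Type*} (α : K → ℤ) (L : List OpIneqAdd) (βS βT : K → ℝ) : Prop :=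
  applyOpsIneqAdd α L βS = βT

/-- `L` is a best diff: a diff of minimum cost (the cost being the number of operations). -/
def IsBestDiffIneqAdd {K : Type*} (α : K → ℤ) (L : List OpIneqAdd) (βS βT : K → ℝ) : Prop :=
  IsDiffIneqAdd α L βS βT ∧
    ∀ L' : List OpIneqAdd, IsDiffIneqAdd α L' βS βT → L.length ≤ L'.length

/-- `A`-values of the SubsetSum instance: `α k = k` on the key set `K = {0,…,n}`. -/
def ssAlpha (n : ℕ) : Fin (n + 1) → ℤ := fun k => ((k : ℕ) : ℤ)

/-- Source `B`-values of the SubsetSum instance: identically `0`. -/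
def ssBS (n : ℕ) : Fin (n + 1) → ℝ := fun _ => 0

/-- Target `B`-values of the SubsetSum instance: `β_T k = b_k = ∑_{ℓ=0}^{k} s ℓ`. -/
noncomputable def ssBT (n : ℕ) (s : ℕ → ℤ) : Fin (n + 1) → ℝ :=
  fun k => ((∑ ℓ ∈ Finset.range ((k : ℕ) + 1), s ℓ : ℤ) : ℝ)

/-- `f` separates the adjacent pair `(j, j+1)`. -/
def SepOp (f : OpIneqAdd) (j : ℕ) : Prop :=
  ¬ (f.cond (j : ℤ) ↔ f.cond ((j : ℤ) + 1))

lemma sepOp_unique (f : OpIneqAdd) {j j' : ℕ} (h : SepOp f j) (h' : SepOp f j') :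
    j = j' := by
  unfold SepOp OpIneqAdd.cond at h h'
  cases hd : f.dir <;> rw [hd] at h h' <;> simp only [if_true, if_false,
    Bool.false_eq_true, Int.cast_natCast, Int.cast_add, Int.cast_one] at h h'
  · -- dir = false : a ≤ v, sep means j < a ≤ j+1
    have hj : (j : ℝ) < f.a ∧ f.a ≤ (j : ℝ) + 1 := by
      by_cases h1 : f.a ≤ (j : ℝ)
      · exact absurd (iff_of_true h1 (h1.trans (by linarith))) h
      · push_neg at h1
        refine ⟨h1, ?_⟩
        by_contra h2
        push_neg at h2
        exact h (iff_of_false (not_le.mpr h1) (not_le.mpr h2))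
    have hj' : (j' : ℝ) < f.a ∧ f.a ≤ (j' : ℝ) + 1 := by
      by_cases h1 : f.a ≤ (j' : ℝ)
      · exact absurd (iff_of_true h1 (h1.trans (by linarith))) h'
      · push_neg at h1
        refine ⟨h1, ?_⟩
        by_contra h2
        push_neg at h2
        exact h' (iff_of_false (not_le.mpr h1) (not_le.mpr h2))
    have a1 : (j : ℝ) < (j' : ℝ) + 1 := lt_of_lt_of_le hj.1 hj'.2
    have a2 : (j' : ℝ) < (j : ℝ) + 1 := lt_of_lt_of_le hj'.1 hj.2
    have b1 : j < j' + 1 := by exact_mod_cast a1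
    have b2 : j' < j + 1 := by exact_mod_cast a2
    omega
  · -- dir = true : v ≤ a, sep means j ≤ a < j+1
    have hj : (j : ℝ) ≤ f.a ∧ f.a < (j : ℝ) + 1 := by
      by_cases h1 : (j : ℝ) ≤ f.a
      · refine ⟨h1, ?_⟩
        by_contra h2
        push_neg at h2
        exact h (iff_of_true h1 h2)
      · push_neg at h1
        exact absurd (iff_of_false (not_le.mpr h1) (not_le.mpr (by linarith))) h
    have hj' : (j' : ℝ) ≤ f.a ∧ f.a < (j' : ℝ) + 1 := by
      by_cases h1 : (j' : ℝ) ≤ f.a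
      · refine ⟨h1, ?_⟩
        by_contra h2
        push_neg at h2
        exact h' (iff_of_true h1 h2)
      · push_neg at h1
        exact absurd (iff_of_false (not_le.mpr h1) (not_le.mpr (by linarith))) h'
    have a1 : (j : ℝ) < (j' : ℝ) + 1 := lt_of_le_of_lt hj.1 hj'.2
    have a2 : (j' : ℝ) < (j : ℝ) + 1 := lt_of_le_of_lt hj'.1 hj.2
    have b1 : j < j' + 1 := by exact_mod_cast a1
    have b2 : j' < j + 1 := by exact_mod_cast a2
    omega

lemma apply_diff_invariant {K : Type*} (α : K → ℤ) :
    ∀ (L : List OpIneqAdd) (β : K → ℝ) (k₁ k₂ : K),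
      (∀ f ∈ L, (f.cond (α k₁) ↔ f.cond (α k₂))) →
      applyOpsIneqAdd α L β k₁ - applyOpsIneqAdd α L β k₂ = β k₁ - β k₂ := by
  intro L
  induction L with
  | nil => intro β k₁ k₂ _; simp [applyOpsIneqAdd]
  | cons f L ih =>
    intro β k₁ k₂ hcond
    have hstep : applyOpsIneqAdd α (f :: L) β = applyOpsIneqAdd α L (f.apply α β) := rfl
    rw [hstep, ih (f.apply α β) k₁ k₂ (fun g hg => hcond g (List.mem_cons_of_mem f hg))]
    have hiff := hcond f (List.mem_cons_self (a := f) (l := L))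
    unfold OpIneqAdd.apply
    by_cases hc : f.cond (α k₁)
    · rw [if_pos hc, if_pos (hiff.mp hc)]; ring
    · rw [if_neg hc, if_neg (fun hc2 => hc (hiff.mpr hc2))]

theorem subsetSum_diff_cost_lower_bound (n : ℕ) (s : ℕ → ℤ) (t : ℤ)
    (ht : 0 < t) (hs0 : s 0 = -t) (hpos : ∀ i, 1 ≤ i → i ≤ n → 0 < s i) :
    (∀ L : List OpIneqAdd,
        IsDiffIneqAdd (ssAlpha n) L (ssBS n) (ssBT n s) → n ≤ L.length) ∧
      ∀ L : List OpIneqAdd,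
        IsBestDiffIneqAdd (ssAlpha n) L (ssBS n) (ssBT n s) → n ≤ L.length := by
  have main : ∀ L : List OpIneqAdd,
      IsDiffIneqAdd (ssAlpha n) L (ssBS n) (ssBT n s) → n ≤ L.length := by
    intro L hL
    -- for each j < n there is an operation in L separating pair (j, j+1)
    have hex : ∀ j : Fin n, ∃ i : Fin L.length, SepOp (L.get i) (j : ℕ) := by
      intro j
      by_contra hno
      push_neg at hno
      have hall : ∀ f ∈ L, (f.cond ((j : ℕ) : ℤ) ↔ f.cond (((j : ℕ) : ℤ) + 1)) := by
        intro f hf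
        obtain ⟨i, hi, rfl⟩ := List.mem_iff_get.mp hf
        exact not_not.mp (hno _)
      set k₂ : Fin (n + 1) := ⟨(j : ℕ), by omega⟩
      set k₁ : Fin (n + 1) := ⟨(j : ℕ) + 1, by omega⟩
      have hα₂ : ssAlpha n k₂ = ((j : ℕ) : ℤ) := rfl
      have hα₁ : ssAlpha n k₁ = ((j : ℕ) : ℤ) + 1 := by
        simp [ssAlpha, k₁]
      have hinv := apply_diff_invariant (ssAlpha n) L (ssBS n) k₁ k₂
        (by intro f hf; rw [hα₁, hα₂]; exact (hall f hf).symm)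
      rw [hL] at hinv
      have hdiff : ssBT n s k₁ - ssBT n s k₂ = ((s ((j : ℕ) + 1) : ℤ) : ℝ) := by
        unfold ssBT
        have : ((k₁ : ℕ) + 1) = ((k₂ : ℕ) + 1) + 1 := rfl
        rw [this, Finset.sum_range_succ]
        push_cast
        ring
      have hspos : 0 < s ((j : ℕ) + 1) := hpos _ (by omega) (by omega)
      have : (0 : ℝ) < ((s ((j : ℕ) + 1) : ℤ) : ℝ) := by exact_mod_cast hspos
      rw [hdiff] at hinv
      simp [ssBS] at hinv
      linarith
    -- build an injective map Fin n → Fin L.length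
    choose g hg using hex
    have hginj : Function.Injective g := by
      intro j j' hjj'
      have h1 := hg j
      have h2 := hg j'
      rw [hjj'] at h1
      exact Fin.ext (sepOp_unique _ h1 h2)
    simpa using Fintype.card_le_of_injective g hginj
  exact ⟨main, fun L hL => main L hL.1⟩
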